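/- Let X ⊆ ∏_{ξ<ω₁} K_ξ be closed (each K_ξ compact metrizable), and suppose every open subset of X is an Fσ (X is hereditarily Lindelöf). Then for every continuous f : S → Q from a subspace S ⊆ X to the Hilbert cube Q = [0,1]^ℕ, there is α < ω₁ such that f is constant on S ∩ π_α⁻¹{z} for every z ∈ π_α(X), where π_α is projection to the first α coordinates. -/

import Mathlib

open Set

/-- The first uncountable ordinal. -/
noncomputable def omega1 : Ordinal := (Cardinal.aleph 1).ord

/-- Projection onto the first `α` coordinates of a product indexed by `{ξ // ξ < β}`. -/
def projTo (K : Ordinal → Type*) {α β : Ordinal} (h : α ≤ β)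
    (x : ∀ ξ : {ξ : Ordinal // ξ < β}, K ξ) : ∀ ξ : {ξ : Ordinal // ξ < α}, K ξ :=
  fun ξ => x ⟨ξ.1, lt_of_lt_of_le ξ.2 h⟩

lemma omega1_isLimit : Order.IsSuccLimit omega1 :=
  Cardinal.isSuccLimit_ord (Cardinal.aleph0_le_aleph 1)

lemma omega1_sup_lt {ι : Type} [Countable ι] (g : ι → Ordinal) (h : ∀ i, g i < omega1) :
    (⨆ i, g i) < omega1 := by
  apply Ordinal.iSup_lt_ord_lift _ h
  rw [omega1, Cardinal.isRegular_aleph_one.cof_eq]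
  exact (Cardinal.lift_le.mpr Cardinal.mk_le_aleph0).trans_lt
    (by rw [Cardinal.lift_aleph0]; exact Cardinal.aleph0_lt_aleph_one)

/-- Agreement of two points of the product below `α`. -/
def Agr (K : Ordinal → Type) (α : Ordinal)
    (x y : ∀ ξ : {ξ : Ordinal // ξ < omega1}, K ξ) : Prop :=
  ∀ ξ : {ξ : Ordinal // ξ < omega1}, ξ.1 < α → x ξ = y ξ

lemma agr_mono {K : Ordinal → Type} {α β : Ordinal}
    {x y : ∀ ξ : {ξ : Ordinal // ξ < omega1}, K ξ} (hab : α ≤ β)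
    (h : Agr K β x y) : Agr K α x y :=
  fun ξ hξ => h ξ (lt_of_lt_of_le hξ hab)

lemma agr_symm {K : Ordinal → Type} {α : Ordinal}
    {x y : ∀ ξ : {ξ : Ordinal // ξ < omega1}, K ξ}
    (h : Agr K α x y) : Agr K α y x :=
  fun ξ hξ => (h ξ hξ).symm

lemma agr_of_projTo {K : Ordinal → Type} {α : Ordinal} (h : α ≤ omega1)
    {x y : ∀ ξ : {ξ : Ordinal // ξ < omega1}, K ξ}
    (he : projTo K h x = projTo K h y) : Agr K α x y :=
  fun ξ hξ => congrFun he ⟨ξ.1, hξ⟩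

lemma projTo_of_agr {K : Ordinal → Type} {α : Ordinal} (h : α ≤ omega1)
    {x y : ∀ ξ : {ξ : Ordinal // ξ < omega1}, K ξ}
    (ha : Agr K α x y) : projTo K h x = projTo K h y :=
  funext fun ξ => ha ⟨ξ.1, lt_of_lt_of_le ξ.2 h⟩ ξ.2

lemma isClosed_agr {K : Ordinal → Type} [∀ ξ, TopologicalSpace (K ξ)]
    [∀ ξ, TopologicalSpace.MetrizableSpace (K ξ)] (α : Ordinal)
    (z : ∀ ξ : {ξ : Ordinal // ξ < omega1}, K ξ) :
    IsClosed {y : ∀ ξ : {ξ : Ordinal // ξ < omega1}, K ξ | Agr K α y z} := by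
  have : {y : ∀ ξ : {ξ : Ordinal // ξ < omega1}, K ξ | Agr K α y z}
      = ⋂ (ξ : {ξ : Ordinal // ξ < omega1}) (_ : ξ.1 < α),
          {y : ∀ ξ : {ξ : Ordinal // ξ < omega1}, K ξ | y ξ = z ξ} := by
    ext y; simp [Agr]
  rw [this]
  exact isClosed_iInter fun ξ => isClosed_iInter fun _ =>
    isClosed_eq (continuous_apply ξ) continuous_const

/-- Key lemma: every closed subset of `X` depends on countably many coordinates. -/
lemma keyClosed (K : Ordinal → Type) [∀ ξ, TopologicalSpace (K ξ)]
    [∀ ξ, CompactSpace (K ξ)] [∀ ξ, TopologicalSpace.MetrizableSpace (K ξ)]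
    (X : Set (∀ ξ : {ξ : Ordinal // ξ < omega1}, K ξ)) (hX : IsClosed X)
    (hHL : ∀ U : Set X, IsOpen U →
      ∃ F : ℕ → Set X, (∀ n, IsClosed (F n)) ∧ U = ⋃ n, F n)
    (C : Set X) (hC : IsClosed C) :
    ∃ α : Ordinal, α < omega1 ∧ ∀ x y : X, Agr K α x.1 y.1 → (x ∈ C ↔ y ∈ C) := by
  haveI : CompactSpace X := isCompact_iff_compactSpace.mp hX.isCompact
  haveI : Nonempty {α : Ordinal // α < omega1} := ⟨⟨0, omega1_isLimit.bot_lt⟩⟩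
  set D : Set (∀ ξ : {ξ : Ordinal // ξ < omega1}, K ξ) := Subtype.val '' C with hD
  have hDcomp : IsCompact D := hC.isCompact.image continuous_subtype_val
  have hDcl : IsClosed D := hDcomp.isClosed
  -- the "determined at level a" approximations
  set Cs : {α : Ordinal // α < omega1} → Set X := fun a =>
    (fun x : X => projTo K a.2.le x.1) ⁻¹' (projTo K a.2.le '' D) with hCs
  have hmem : ∀ a (x : X), x ∈ Cs a ↔ ∃ y ∈ D, Agr K a.1 y x.1 := by
    intro a x
    constructor
    · rintro ⟨y, hy, he⟩
      exact ⟨y, hy, agr_of_projTo a.2.le he⟩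
    · rintro ⟨y, hy, ha⟩
      exact ⟨y, hy, projTo_of_agr a.2.le ha⟩
  have hCsCl : ∀ a, IsClosed (Cs a) := by
    intro a
    have hcont : Continuous (fun x : ∀ ξ : {ξ : Ordinal // ξ < omega1}, K ξ =>
        projTo K a.2.le x) := continuous_pi fun ξ => continuous_apply _
    exact ((hDcomp.image hcont).isClosed).preimage (hcont.comp continuous_subtype_val)
  have hCsub : ∀ a, C ⊆ Cs a := fun a x hx =>
    (hmem a x).mpr ⟨x.1, mem_image_of_mem _ hx, fun ξ _ => rfl⟩
  have hmono : ∀ a b : {α : Ordinal // α < omega1}, a.1 ≤ b.1 → Cs b ⊆ Cs a := by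
    intro a b hab x hx
    obtain ⟨y, hy, ha⟩ := (hmem b x).mp hx
    exact (hmem a x).mpr ⟨y, hy, agr_mono hab ha⟩
  -- the intersection of all approximations is C
  have hinter : ∀ x : X, (∀ a, x ∈ Cs a) → x ∈ C := by
    intro x hx
    set E : {α : Ordinal // α < omega1} →
        Set (∀ ξ : {ξ : Ordinal // ξ < omega1}, K ξ) :=
      fun a => D ∩ {y | Agr K a.1 y x.1} with hE
    have hEne : ∀ a, (E a).Nonempty := by
      intro a
      obtain ⟨y, hy, ha⟩ := (hmem a x).mp (hx a)
      exact ⟨y, hy, ha⟩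
    have hEdir : Directed (· ⊇ ·) E := by
      intro a b
      refine ⟨⟨max a.1 b.1, max_lt a.2 b.2⟩, ?_, ?_⟩
      · rintro y ⟨hyD, hyA⟩; exact ⟨hyD, agr_mono (le_max_left _ _) hyA⟩
      · rintro y ⟨hyD, hyA⟩; exact ⟨hyD, agr_mono (le_max_right _ _) hyA⟩
    obtain ⟨y, hy⟩ :=
      IsCompact.nonempty_iInter_of_directed_nonempty_isCompact_isClosed E hEdir hEne
        (fun a => hDcomp.inter_right (isClosed_agr _ _))
        (fun a => hDcl.inter (isClosed_agr _ _))
    simp only [mem_iInter] at hy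
    have hyD : y ∈ D := (hy ⟨0, omega1_isLimit.bot_lt⟩).1
    have hyx : y = x.1 := by
      funext ξ
      exact (hy ⟨Order.succ ξ.1, omega1_isLimit.succ_lt ξ.2⟩).2 ξ (Order.lt_succ ξ.1)
    rw [hyx] at hyD
    obtain ⟨c, hcC, hcx⟩ := hyD
    rwa [Subtype.ext hcx] at hcC
  -- stabilization via the Fσ property
  obtain ⟨F, hFcl, hFU⟩ := hHL Cᶜ hC.isOpen_compl
  have hcov : ∀ n, F n ⊆ ⋃ a, (Cs a)ᶜ := by
    intro n z hz
    have hzC : z ∉ C := by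
      have : z ∈ Cᶜ := by rw [hFU]; exact mem_iUnion.mpr ⟨n, hz⟩
      exact this
    simp only [mem_iUnion, mem_compl_iff]
    by_contra hcon
    push_neg at hcon
    exact hzC (hinter z hcon)
  have hdir2 : Directed (· ⊆ ·) (fun a => (Cs a)ᶜ) := by
    intro a b
    exact ⟨⟨max a.1 b.1, max_lt a.2 b.2⟩,
      compl_subset_compl.mpr (hmono _ _ (le_max_left _ _)),
      compl_subset_compl.mpr (hmono _ _ (le_max_right _ _))⟩
  choose a ha using fun n =>
    ((hFcl n).isCompact).elim_directed_cover _ (fun a => (hCsCl a).isOpen_compl)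
      (hcov n) hdir2
  set β : Ordinal := ⨆ n, (a n).1 with hβdef
  have hβ : β < omega1 := omega1_sup_lt _ fun n => (a n).2
  have hle : ∀ n, (a n).1 ≤ β := fun n => le_ciSup (Ordinal.bddAbove_range _) n
  -- the approximation at β equals C
  have hstab : Cs ⟨β, hβ⟩ ⊆ C := by
    intro x hx
    by_contra hxC
    have : x ∈ Cᶜ := hxC
    rw [hFU] at this
    obtain ⟨n, hn⟩ := mem_iUnion.mp this
    exact (ha n hn) (hmono _ _ (hle n) hx)
  refine ⟨β, hβ, ?_⟩
  intro x y hagr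
  constructor
  · intro hx
    exact hstab ((hmem ⟨β, hβ⟩ y).mpr ⟨x.1, mem_image_of_mem _ hx, hagr⟩)
  · intro hy
    exact hstab ((hmem ⟨β, hβ⟩ x).mpr ⟨y.1, mem_image_of_mem _ hy, agr_symm hagr⟩)

/-- Key lemma for open sets. -/
lemma keyOpen (K : Ordinal → Type) [∀ ξ, TopologicalSpace (K ξ)]
    [∀ ξ, CompactSpace (K ξ)] [∀ ξ, TopologicalSpace.MetrizableSpace (K ξ)]
    (X : Set (∀ ξ : {ξ : Ordinal // ξ < omega1}, K ξ)) (hX : IsClosed X)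
    (hHL : ∀ U : Set X, IsOpen U →
      ∃ F : ℕ → Set X, (∀ n, IsClosed (F n)) ∧ U = ⋃ n, F n)
    (V : Set X) (hV : IsOpen V) :
    ∃ α : Ordinal, α < omega1 ∧ ∀ x y : X, Agr K α x.1 y.1 → (x ∈ V ↔ y ∈ V) := by
  obtain ⟨F, hFcl, hFU⟩ := hHL V hV
  choose α hα hres using fun n => keyClosed K X hX hHL (F n) (hFcl n)
  refine ⟨⨆ n, α n, omega1_sup_lt _ hα, ?_⟩
  intro x y hagr
  have hle : ∀ n, α n ≤ ⨆ n, α n := fun n => le_ciSup (Ordinal.bddAbove_range _) n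
  rw [hFU]
  simp only [mem_iUnion]
  constructor
  · rintro ⟨n, hn⟩
    exact ⟨n, (hres n x y (agr_mono (hle n) hagr)).mp hn⟩
  · rintro ⟨n, hn⟩
    exact ⟨n, (hres n x y (agr_mono (hle n) hagr)).mpr hn⟩

/-- If `X` is a hereditarily Lindelöf closed subspace of an `ω₁`-indexed product
of compact metrizable spaces (every open subset of `X` is an Fσ), then every
continuous map from a subspace `S ⊆ X` into the Hilbert cube is constant on the
traces on `S` of the fibers of some countable projection `π_α`. -/
theorem stmt15 (K : Ordinal → Type) [∀ ξ, TopologicalSpace (K ξ)]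
    [∀ ξ, CompactSpace (K ξ)] [∀ ξ, TopologicalSpace.MetrizableSpace (K ξ)]
    (X : Set (∀ ξ : {ξ : Ordinal // ξ < omega1}, K ξ)) (hX : IsClosed X)
    (hHL : ∀ U : Set X, IsOpen U →
      ∃ F : ℕ → Set X, (∀ n, IsClosed (F n)) ∧ U = ⋃ n, F n)
    (S : Set X) (f : S → (ℕ → Icc (0:ℝ) 1)) (hf : Continuous f) :
    ∃ α : Ordinal, α < omega1 ∧ ∀ h : α ≤ omega1, ∀ s s' : S,
      projTo K h (s : X).1 = projTo K h (s' : X).1 → f s = f s' := by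
  classical
  -- countable family of open subsets of S separating values of f
  set U : ℕ × ℚ × Bool → Set S := fun p =>
    {t | cond p.2.2 (((f t p.1 : ℝ)) < (p.2.1 : ℝ)) ((p.2.1 : ℝ) < (f t p.1 : ℝ))} with hU
  have hcont : ∀ n : ℕ, Continuous (fun t : S => (f t n : ℝ)) := fun n =>
    continuous_subtype_val.comp ((continuous_apply n).comp hf)
  have hUopen : ∀ p, IsOpen (U p) := by
    rintro ⟨n, q, b⟩
    cases b
    · exact isOpen_lt continuous_const (hcont n)
    · exact isOpen_lt (hcont n) continuous_const
  -- transfer to open subsets of X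
  have hind : ∀ p, ∃ V : Set X, IsOpen V ∧ Subtype.val ⁻¹' V = U p := fun p =>
    isOpen_induced_iff.mp (hUopen p)
  choose V hVopen hVeq using hind
  choose α hα hres using fun p => keyOpen K X hX hHL (V p) (hVopen p)
  set β : Ordinal := ⨆ p, α p with hβdef
  have hβ : β < omega1 := omega1_sup_lt _ hα
  refine ⟨β, hβ, ?_⟩
  intro h s s' hproj
  have hagr : Agr K β (s : X).1 (s' : X).1 := agr_of_projTo h hproj
  have htrans : ∀ p, s ∈ U p ↔ s' ∈ U p := by
    intro p
    have hle : α p ≤ β := le_ciSup (Ordinal.bddAbove_range _) p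
    have h1 : s ∈ U p ↔ (s : X) ∈ V p := by rw [← hVeq p]; rfl
    have h2 : s' ∈ U p ↔ (s' : X) ∈ V p := by rw [← hVeq p]; rfl
    rw [h1, h2]
    exact hres p (s : X) (s' : X) (agr_mono hle hagr)
  by_contra hne
  obtain ⟨n, hn⟩ := Function.ne_iff.mp hne
  have hval : (f s n : ℝ) ≠ (f s' n : ℝ) := fun hc => hn (Subtype.ext hc)
  rcases lt_or_gt_of_ne hval with hlt | hgt
  · obtain ⟨q, hq1, hq2⟩ := exists_rat_btwn hlt
    have hs : s ∈ U (n, q, true) := hq1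
    have hs' : s' ∈ U (n, q, true) := (htrans _).mp hs
    exact absurd hs' (not_lt.mpr hq2.le)
  · obtain ⟨q, hq1, hq2⟩ := exists_rat_btwn hgt
    have hs : s ∈ U (n, q, false) := hq2
    have hs' : s' ∈ U (n, q, false) := (htrans _).mp hs
    exact absurd hs' (not_lt.mpr hq1.le)
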